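/- Consider the affine recursion y(t+1) = A y(t) + b(t) on ℝ^m, where A is the tridiagonal matrix with 1/2 on off-diagonals and b(t) = (x(t)/2, 0, …, 0, (1−x(t))/2)ᵀ for an arbitrary real sequence x(t). Then the quantity y_1(t) + y_m(t) evolves autonomously of the sequence x(t): explicitly, y_1(t) + y_m(t) = 1 − (2/(m+1)) Σ_{i=1}^{⌈m/2⌉} f_{2i−1}(y(0)) λ_{2i−1}^t, where λ_k = cos(πk/(m+1)), v_k is the orthonormal eigenvector of A for λ_k, and f_k(y) = 1 + λ_k − 2·sqrt(1−λ_k²)·sqrt((m+1)/2)·v_kᵀ y. -/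

import Mathlib

open Real

open Finset in
/-- Dirichlet-type sum over odd multiples. -/
lemma blossom_dir (M : ℕ) (x : ℝ) :
    (∑ i ∈ Finset.range M, Real.cos ((2*(i:ℝ)+1)*x)) * (2 * Real.sin x)
      = Real.sin (2*(M:ℝ)*x) := by
  induction M with
  | zero => simp
  | succ M ih =>
    rw [Finset.sum_range_succ, add_mul, ih]
    have h := Real.sin_sub_sin (2*((M:ℝ)+1)*x) (2*(M:ℝ)*x)
    have e1 : (2*((M:ℝ)+1)*x - 2*(M:ℝ)*x)/2 = x := by ring
    have e2 : (2*((M:ℝ)+1)*x + 2*(M:ℝ)*x)/2 = (2*(M:ℝ)+1)*x := by ring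
    rw [e1, e2] at h
    push_cast
    linarith [h]

noncomputable def blossomC (m r : ℕ) : ℝ :=
  ∑ i ∈ Finset.range ((m+1)/2), Real.cos ((2*(i:ℝ)+1) * ((r:ℝ) * (π/((m:ℝ)+1))))

lemma blossomC_zero (m : ℕ) : blossomC m 0 = (((m+1)/2 : ℕ) : ℝ) := by
  simp [blossomC]

lemma blossomC_top (m : ℕ) : blossomC m (m+1) = -((((m+1)/2 : ℕ) : ℝ)) := by
  have hm1 : ((m:ℝ)+1) ≠ 0 := by positivity
  unfold blossomC
  rw [show (∑ i ∈ Finset.range ((m+1)/2),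
      Real.cos ((2*(i:ℝ)+1) * (((m+1 : ℕ):ℝ) * (π/((m:ℝ)+1)))))
      = ∑ i ∈ Finset.range ((m+1)/2), (-1 : ℝ) from ?_]
  · simp
  refine Finset.sum_congr rfl fun i _ => ?_
  have e : (2*(i:ℝ)+1) * (((m+1 : ℕ):ℝ) * (π/((m:ℝ)+1))) = (i:ℕ) * (2*π) + π := by
    push_cast; field_simp
  rw [e, Real.cos_nat_mul_two_pi_add_pi]

lemma blossomC_mid (m r : ℕ) (hr1 : 1 ≤ r) (hr2 : r ≤ m) :
    blossomC m r = if m % 2 = 0 then (-1:ℝ)^(r+1)/2 else 0 := by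
  have hm1 : (0:ℝ) < (m:ℝ)+1 := by positivity
  set θ : ℝ := (r:ℝ) * (π/((m:ℝ)+1)) with hθ
  have hθpos : 0 < θ := by
    apply mul_pos (by exact_mod_cast Nat.cast_pos.2 hr1)
    positivity
  have hθlt : θ < π := by
    rw [hθ, mul_div_assoc']
    rw [div_lt_iff₀ hm1]
    have : (r:ℝ) ≤ (m:ℝ) := by exact_mod_cast hr2
    nlinarith [Real.pi_pos]
  have hsin : Real.sin θ ≠ 0 := ne_of_gt (Real.sin_pos_of_pos_of_lt_pi hθpos hθlt)
  have h2s : (2 * Real.sin θ) ≠ 0 := by positivity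
  have key := blossom_dir ((m+1)/2) θ
  unfold blossomC
  rw [← hθ]
  rcases Nat.even_or_odd m with ⟨a, ha⟩ | ⟨a, ha⟩
  · -- m = a + a even
    subst ha
    have hM : ((a+a+1)/2 : ℕ) = a := by omega
    rw [hM] at key ⊢
    have e : 2*(a:ℝ)*θ = (r:ℕ) * π - θ := by
      rw [hθ]; push_cast; field_simp; ring
    rw [e, Real.sin_nat_mul_pi_sub] at key
    have hif : (a+a) % 2 = 0 := by omega
    rw [if_pos hif]
    refine mul_right_cancel₀ h2s ?_
    rw [key]; ring
  · subst ha
    have hM : ((2*a+1+1)/2 : ℕ) = a+1 := by omega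
    rw [hM] at key ⊢
    have e : 2*((a:ℝ)+1)*θ = (r:ℕ) * π := by
      rw [hθ]; push_cast; field_simp; ring
    push_cast at key
    rw [e, Real.sin_nat_mul_pi] at key
    have hif : ¬ ((2*a+1) % 2 = 0) := by omega
    rw [if_neg hif]
    refine mul_right_cancel₀ h2s ?_
    rw [key]; ring

lemma blossomC_diff (m j : ℕ) (hm : 2 ≤ m) (hj : j < m) :
    blossomC m j - blossomC m (j+2)
      = ((m:ℝ)+1)/2 * ((if j = 0 then (1:ℝ) else 0) + (if j = m-1 then (1:ℝ) else 0)) := by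
  have hMe : m % 2 = 0 → ((((m+1)/2 : ℕ)) : ℝ) = (m:ℝ)/2 := by
    intro h
    obtain ⟨a, rfl⟩ : ∃ a, m = 2*a := ⟨m/2, by omega⟩
    rw [show (2*a+1)/2 = a from by omega]; push_cast; ring
  have hMo : m % 2 = 1 → ((((m+1)/2 : ℕ)) : ℝ) = ((m:ℝ)+1)/2 := by
    intro h
    obtain ⟨a, rfl⟩ : ∃ a, m = 2*a+1 := ⟨m/2, by omega⟩
    rw [show (2*a+1+1)/2 = a+1 from by omega]; push_cast; ring
  by_cases hj0 : j = 0
  · subst hj0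
    rw [if_pos rfl, if_neg (by omega), blossomC_zero, blossomC_mid m 2 (by omega) hm]
    rcases Nat.even_or_odd' m with ⟨a, ha | ha⟩
    · rw [if_pos (by omega), hMe (by omega)]; norm_num; ring
    · rw [if_neg (by omega), hMo (by omega)]; ring
  by_cases hj1 : j = m - 1
  · subst hj1
    rw [show m - 1 + 2 = m + 1 from by omega, blossomC_top,
      blossomC_mid m (m-1) (by omega) (by omega), if_neg hj0, if_pos rfl,
      show m - 1 + 1 = m from by omega]
    rcases Nat.even_or_odd' m with ⟨a, ha | ha⟩
    · rw [if_pos (by omega), hMe (by omega), (Even.neg_one_pow (α := ℝ) ⟨a, by omega⟩)]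
      ring
    · rw [if_neg (by omega), hMo (by omega)]; ring
  · rw [if_neg hj0, if_neg hj1, blossomC_mid m j (by omega) (by omega),
      blossomC_mid m (j+2) (by omega) (by omega)]
    by_cases hp : m % 2 = 0
    · rw [if_pos hp, if_pos hp, show j+2+1 = (j+1)+2 from by omega, pow_add]; ring
    · rw [if_neg hp, if_neg hp]; ring

lemma blossom_inv (m : ℕ) (hm : 2 ≤ m) (j : ℕ) (hj : j < m) :
    ∑ i ∈ Finset.range ((m+1)/2),
        2 * Real.sin ((2*(i:ℝ)+1) * (π/((m:ℝ)+1)))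
          * Real.sin ((2*(i:ℝ)+1) * (((j:ℝ)+1) * (π/((m:ℝ)+1))))
      = ((m:ℝ)+1)/2 * ((if j = 0 then (1:ℝ) else 0) + (if j = m-1 then (1:ℝ) else 0)) := by
  rw [show (∑ i ∈ Finset.range ((m+1)/2),
      2 * Real.sin ((2*(i:ℝ)+1) * (π/((m:ℝ)+1)))
        * Real.sin ((2*(i:ℝ)+1) * (((j:ℝ)+1) * (π/((m:ℝ)+1)))))
      = ∑ i ∈ Finset.range ((m+1)/2),
        (Real.cos ((2*(i:ℝ)+1) * (((j:ℕ):ℝ) * (π/((m:ℝ)+1))))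
          - Real.cos ((2*(i:ℝ)+1) * ((((j+2:ℕ)):ℝ) * (π/((m:ℝ)+1))))) from ?_]
  · rw [Finset.sum_sub_distrib]
    exact blossomC_diff m j hm hj
  refine Finset.sum_congr rfl fun i _ => ?_
  have h := Real.cos_sub_cos ((2*(i:ℝ)+1) * ((j:ℝ) * (π/((m:ℝ)+1))))
    ((2*(i:ℝ)+1) * (((j:ℝ)+2) * (π/((m:ℝ)+1))))
  have e1 : ((2*(i:ℝ)+1) * ((j:ℝ) * (π/((m:ℝ)+1)))
      + (2*(i:ℝ)+1) * (((j:ℝ)+2) * (π/((m:ℝ)+1))))/2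
      = (2*(i:ℝ)+1) * (((j:ℝ)+1) * (π/((m:ℝ)+1))) := by ring
  have e2 : ((2*(i:ℝ)+1) * ((j:ℝ) * (π/((m:ℝ)+1)))
      - (2*(i:ℝ)+1) * (((j:ℝ)+2) * (π/((m:ℝ)+1))))/2
      = -((2*(i:ℝ)+1) * (π/((m:ℝ)+1))) := by ring
  rw [e1, e2, Real.sin_neg] at h
  push_cast
  linarith [h]

lemma blossom_one (m : ℕ) (hm : 2 ≤ m) :
    ∑ i ∈ Finset.range ((m+1)/2), (1 + Real.cos ((2*(i:ℝ)+1)*(π/((m:ℝ)+1))))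
      = ((m:ℝ)+1)/2 := by
  rw [Finset.sum_add_distrib]
  have h1 : (∑ _i ∈ Finset.range ((m+1)/2), (1:ℝ)) = (((m+1)/2 : ℕ) : ℝ) := by simp
  have h2 : (∑ i ∈ Finset.range ((m+1)/2), Real.cos ((2*(i:ℝ)+1)*(π/((m:ℝ)+1))))
      = blossomC m 1 := by
    refine Finset.sum_congr rfl fun i _ => ?_
    norm_num [blossomC]
  rw [h1, h2, blossomC_mid m 1 le_rfl (by omega)]
  rcases Nat.even_or_odd' m with ⟨a, ha | ha⟩
  · rw [if_pos (by omega)]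
    obtain ⟨rfl⟩ : m = 2*a := by omega
    rw [show (2*a+1)/2 = a from by omega]; push_cast; norm_num; ring
  · rw [if_neg (by omega)]
    obtain ⟨rfl⟩ : m = 2*a+1 := by omega
    rw [show (2*a+1+1)/2 = a+1 from by omega]; push_cast; ring

/-- For the affine recursion y(t+1) = A y(t) + b(t) with A tridiagonal (1/2 on
off-diagonals) and b(t) = (x(t)/2, 0, …, 0, (1−x(t))/2)ᵀ, the quantity
y_1(t) + y_m(t) evolves autonomously of x(t):
y_1(t) + y_m(t) = 1 − (2/(m+1)) Σ_{i=1}^{⌈m/2⌉} f_{2i−1}(y(0)) λ_{2i−1}^t. -/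
theorem blossom_loop_endpoint_sum (m : ℕ) (hm : 2 ≤ m)
    (A : Matrix (Fin m) (Fin m) ℝ)
    (hA : ∀ i j : Fin m,
      A i j = if i.val + 1 = j.val ∨ j.val + 1 = i.val then (1:ℝ)/2 else 0)
    (x : ℕ → ℝ) (b : ℕ → Fin m → ℝ)
    (hb : ∀ t (i : Fin m),
      b t i = if i.val = 0 then x t / 2
        else if i.val = m - 1 then (1 - x t) / 2 else 0)
    (y : ℕ → Fin m → ℝ)
    (hy : ∀ t, y (t + 1) = A.mulVec (y t) + b t) :
    ∀ t : ℕ,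
      y t ⟨0, by omega⟩ + y t ⟨m - 1, by omega⟩
        = 1 - (2 / (m + 1 : ℝ)) *
            ∑ i ∈ Finset.Icc 1 ((m + 1) / 2),
              (1 + Real.cos (π * (2 * i - 1 : ℕ) / (m + 1))
                - 2 * Real.sqrt (1 - Real.cos (π * (2 * i - 1 : ℕ) / (m + 1)) ^ 2)
                  * Real.sqrt ((m + 1) / 2)
                  * ∑ j : Fin m,
                      (Real.sqrt (2 / (m + 1))
                        * Real.sin (π * (2 * i - 1 : ℕ) * (j.val + 1) / (m + 1)))
                      * y 0 j)
              * Real.cos (π * (2 * i - 1 : ℕ) / (m + 1)) ^ t := by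
  have hm1 : ((m:ℝ)+1) ≠ 0 := by positivity
  set θ : ℝ := π / ((m:ℝ)+1) with hθ
  set c : ℕ → ℕ → ℝ :=
    fun k s => ∑ j : Fin m, Real.sin ((k:ℝ) * (((j.val:ℝ)+1) * θ)) * y s j with hc
  -- sin (k (m+1) θ) = 0
  have skm1 : ∀ k : ℕ, Real.sin ((k:ℝ) * (((m:ℝ)+1) * θ)) = 0 := by
    intro k
    rw [show (k:ℝ) * (((m:ℝ)+1) * θ) = (k:ℕ)*π from by rw [hθ]; field_simp]
    exact Real.sin_nat_mul_pi k
  -- eigenvector relation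
  have eig : ∀ (k : ℕ) (v : Fin m → ℝ),
      (∑ j : Fin m, Real.sin ((k:ℝ) * (((j.val:ℝ)+1) * θ)) * (A.mulVec v j))
        = Real.cos ((k:ℝ)*θ)
          * ∑ j : Fin m, Real.sin ((k:ℝ) * (((j.val:ℝ)+1) * θ)) * v j := by
    intro k v
    have inner : ∀ l : Fin m,
        (∑ j : Fin m, A j l * Real.sin ((k:ℝ) * (((j.val:ℝ)+1) * θ)))
          = Real.cos ((k:ℝ)*θ) * Real.sin ((k:ℝ) * (((l.val:ℝ)+1) * θ)) := by
      intro l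
      have hsplit : ∀ j : Fin m, A j l
          = (if j.val+1 = l.val then (1:ℝ)/2 else 0)
            + (if l.val+1 = j.val then (1:ℝ)/2 else 0) := by
        intro j
        rw [hA j l]
        by_cases h1 : j.val+1 = l.val
        · have h2 : ¬(l.val+1 = j.val) := by omega
          simp [h1, h2]
        · by_cases h2 : l.val+1 = j.val <;> simp [h1, h2]
      have S1 : (∑ j : Fin m, (if j.val+1 = l.val then (1:ℝ)/2 else 0)
            * Real.sin ((k:ℝ) * (((j.val:ℝ)+1) * θ)))
          = Real.sin ((k:ℝ) * ((l.val:ℝ) * θ))/2 := by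
        by_cases hl : l.val = 0
        · rw [show Real.sin ((k:ℝ) * ((l.val:ℝ) * θ)) = 0 from by rw [hl]; norm_num,
            zero_div]
          exact Finset.sum_eq_zero fun j _ => by rw [if_neg (by omega), zero_mul]
        · rw [Finset.sum_eq_single_of_mem (⟨l.val-1, by omega⟩ : Fin m)
            (Finset.mem_univ _) ?_]
          · rw [if_pos (show ((⟨l.val-1, by omega⟩ : Fin m)).val + 1 = l.val by
              simp only []; omega)]
            have ecast : ((((⟨l.val-1, by omega⟩ : Fin m)).val : ℝ)+1) = (l.val:ℝ) := by
              simp only []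
              have h1 : 1 ≤ l.val := by omega
              push_cast [Nat.cast_sub h1]
              ring
            rw [ecast]; ring
          · intro j _ hj
            rw [if_neg (fun hcon => hj (Fin.ext (show j.val = l.val - 1 by omega))),
              zero_mul]
      have S2 : (∑ j : Fin m, (if l.val+1 = j.val then (1:ℝ)/2 else 0)
            * Real.sin ((k:ℝ) * (((j.val:ℝ)+1) * θ)))
          = Real.sin ((k:ℝ) * (((l.val:ℝ)+2) * θ))/2 := by
        by_cases hl : l.val + 1 < m
        · rw [Finset.sum_eq_single_of_mem (⟨l.val+1, hl⟩ : Fin m)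
            (Finset.mem_univ _) ?_]
          · rw [if_pos rfl]
            rw [show ((((⟨l.val+1, hl⟩ : Fin m)).val : ℝ)+1) = ((l.val:ℝ)+2) from by
              push_cast; ring]
            ring
          · intro j _ hj
            rw [if_neg (fun hcon => hj (Fin.ext (show j.val = l.val + 1 by omega))),
              zero_mul]
        · have hz : Real.sin ((k:ℝ) * (((l.val:ℝ)+2) * θ)) = 0 := by
            have hlv : l.val + 1 = m := by have := l.isLt; omega
            rw [show ((l.val:ℝ)+2) = ((m:ℝ)+1) from by push_cast [← hlv]; ring]
            exact skm1 k
          rw [hz, zero_div]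
          exact Finset.sum_eq_zero fun j _ => by
            have := j.isLt
            rw [if_neg (by omega), zero_mul]
      have trig : Real.sin ((k:ℝ) * ((l.val:ℝ) * θ))/2
            + Real.sin ((k:ℝ) * (((l.val:ℝ)+2) * θ))/2
          = Real.cos ((k:ℝ)*θ) * Real.sin ((k:ℝ) * (((l.val:ℝ)+1) * θ)) := by
        have h := Real.sin_sub_sin ((k:ℝ) * ((l.val:ℝ) * θ))
          (-((k:ℝ) * (((l.val:ℝ)+2) * θ)))
        have e1 : ((k:ℝ) * ((l.val:ℝ) * θ) - -((k:ℝ) * (((l.val:ℝ)+2) * θ)))/2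
            = (k:ℝ) * (((l.val:ℝ)+1) * θ) := by ring
        have e2 : ((k:ℝ) * ((l.val:ℝ) * θ) + -((k:ℝ) * (((l.val:ℝ)+2) * θ)))/2
            = -((k:ℝ) * θ) := by ring
        rw [e1, e2, Real.cos_neg, Real.sin_neg] at h
        linarith
      calc (∑ j : Fin m, A j l * Real.sin ((k:ℝ) * (((j.val:ℝ)+1) * θ)))
          = (∑ j : Fin m, ((if j.val+1 = l.val then (1:ℝ)/2 else 0)
              * Real.sin ((k:ℝ) * (((j.val:ℝ)+1) * θ))
            + (if l.val+1 = j.val then (1:ℝ)/2 else 0)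
              * Real.sin ((k:ℝ) * (((j.val:ℝ)+1) * θ)))) := by
            refine Finset.sum_congr rfl fun j _ => ?_
            rw [hsplit j]; ring
        _ = Real.sin ((k:ℝ) * ((l.val:ℝ) * θ))/2
            + Real.sin ((k:ℝ) * (((l.val:ℝ)+2) * θ))/2 := by
            rw [Finset.sum_add_distrib, S1, S2]
        _ = Real.cos ((k:ℝ)*θ) * Real.sin ((k:ℝ) * (((l.val:ℝ)+1) * θ)) := trig
    calc (∑ j : Fin m, Real.sin ((k:ℝ) * (((j.val:ℝ)+1) * θ)) * (A.mulVec v j))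
        = ∑ l : Fin m, (∑ j : Fin m, A j l * Real.sin ((k:ℝ) * (((j.val:ℝ)+1) * θ))) * v l := by
          simp only [Matrix.mulVec, dotProduct, Finset.mul_sum]
          rw [Finset.sum_comm]
          refine Finset.sum_congr rfl fun l _ => ?_
          rw [Finset.sum_mul]
          exact Finset.sum_congr rfl fun j _ => by ring
      _ = ∑ l : Fin m, Real.cos ((k:ℝ)*θ)
            * (Real.sin ((k:ℝ) * (((l.val:ℝ)+1) * θ)) * v l) := by
          refine Finset.sum_congr rfl fun l _ => ?_
          rw [inner l]; ring
      _ = _ := by rw [← Finset.mul_sum]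
  -- odd reflection
  have sodd : ∀ i : ℕ,
      Real.sin (((2*i+1:ℕ):ℝ) * ((m:ℝ)*θ)) = Real.sin (((2*i+1:ℕ):ℝ)*θ) := by
    intro i
    have e : ((2*i+1:ℕ):ℝ) * ((m:ℝ)*θ) = ((2*i+1:ℕ):ℝ)*π - ((2*i+1:ℕ):ℝ)*θ := by
      rw [hθ]; field_simp; ring
    rw [e, Real.sin_nat_mul_pi_sub, Odd.neg_one_pow ⟨i, by ring⟩]
    ring
  -- b-part
  have bsum : ∀ (i s : ℕ),
      (∑ j : Fin m, Real.sin (((2*i+1:ℕ):ℝ) * (((j.val:ℝ)+1) * θ)) * b s j)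
        = Real.sin (((2*i+1:ℕ):ℝ)*θ)/2 := by
    intro i s
    have hne : (⟨0, by omega⟩ : Fin m) ≠ (⟨m-1, by omega⟩ : Fin m) := by
      intro h
      have := congrArg Fin.val h
      simp at this
      omega
    calc (∑ j : Fin m, Real.sin (((2*i+1:ℕ):ℝ) * (((j.val:ℝ)+1) * θ)) * b s j)
        = ∑ j : Fin m,
            ((if j = (⟨0, by omega⟩ : Fin m)
                then Real.sin (((2*i+1:ℕ):ℝ)*θ) * (x s/2) else 0)
            + (if j = (⟨m-1, by omega⟩ : Fin m)
                then Real.sin (((2*i+1:ℕ):ℝ) * ((m:ℝ)*θ)) * ((1 - x s)/2) else 0)) := by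
          refine Finset.sum_congr rfl fun j _ => ?_
          rw [hb s j]
          by_cases h0 : j.val = 0
          · have e1 : j = (⟨0, by omega⟩ : Fin m) := Fin.ext h0
            have e2 : j ≠ (⟨m-1, by omega⟩ : Fin m) := by
              intro hcon
              rw [hcon] at h0
              simp only [] at h0
              omega
            rw [if_pos h0, if_pos e1, if_neg e2]
            rw [show ((j.val:ℝ)+1) * θ = θ from by rw [h0]; push_cast; ring]
            ring
          · by_cases h1 : j.val = m-1
            · have e1 : j ≠ (⟨0, by omega⟩ : Fin m) := by
                intro hcon; rw [hcon] at h0; exact h0 rfl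
              have e2 : j = (⟨m-1, by omega⟩ : Fin m) := Fin.ext h1
              rw [if_neg h0, if_pos h1, if_neg e1, if_pos e2]
              rw [show ((j.val:ℝ)+1) * θ = (m:ℝ)*θ from by
                rw [h1]; push_cast [Nat.cast_sub (show 1 ≤ m by omega)]; ring]
              ring
            · have e1 : j ≠ (⟨0, by omega⟩ : Fin m) := by
                intro hcon; rw [hcon] at h0; exact h0 rfl
              have e2 : j ≠ (⟨m-1, by omega⟩ : Fin m) := by
                intro hcon; rw [hcon] at h1; exact h1 rfl
              rw [if_neg h0, if_neg h1, if_neg e1, if_neg e2]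
              simp
      _ = Real.sin (((2*i+1:ℕ):ℝ)*θ) * (x s/2)
          + Real.sin (((2*i+1:ℕ):ℝ) * ((m:ℝ)*θ)) * ((1 - x s)/2) := by
          rw [Finset.sum_add_distrib, Finset.sum_ite_eq' _ _ _, Finset.sum_ite_eq' _ _ _]
          simp
      _ = Real.sin (((2*i+1:ℕ):ℝ)*θ)/2 := by rw [sodd i]; ring
  -- the recursion for c
  have step : ∀ (i s : ℕ),
      c (2*i+1) (s+1)
        = Real.cos (((2*i+1:ℕ):ℝ)*θ) * c (2*i+1) s + Real.sin (((2*i+1:ℕ):ℝ)*θ)/2 := by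
    intro i s
    simp only [hc]
    rw [hy s]
    calc (∑ j : Fin m, Real.sin (((2*i+1:ℕ):ℝ) * (((j.val:ℝ)+1) * θ))
            * (A.mulVec (y s) + b s) j)
        = (∑ j : Fin m, Real.sin (((2*i+1:ℕ):ℝ) * (((j.val:ℝ)+1) * θ))
            * (A.mulVec (y s) j))
          + ∑ j : Fin m, Real.sin (((2*i+1:ℕ):ℝ) * (((j.val:ℝ)+1) * θ)) * b s j := by
          rw [← Finset.sum_add_distrib]
          exact Finset.sum_congr rfl fun j _ => by simp [Pi.add_apply]; ring
      _ = _ := by rw [eig (2*i+1) (y s), bsum i s]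
  -- invariant
  have inv : ∀ (i s : ℕ),
      2 * Real.sin (((2*i+1:ℕ):ℝ)*θ) * c (2*i+1) s
        = (1 + Real.cos (((2*i+1:ℕ):ℝ)*θ))
          + (Real.cos (((2*i+1:ℕ):ℝ)*θ))^s
            * (2 * Real.sin (((2*i+1:ℕ):ℝ)*θ) * c (2*i+1) 0
              - (1 + Real.cos (((2*i+1:ℕ):ℝ)*θ))) := by
    intro i s
    induction s with
    | zero => rw [pow_zero]; ring
    | succ s ih =>
      rw [step i s, pow_succ]
      linear_combination Real.cos (((2*i+1:ℕ):ℝ)*θ) * ih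
        + Real.sin_sq_add_cos_sq (((2*i+1:ℕ):ℝ)*θ)
  -- inversion identity
  have invr : ∀ s : ℕ,
      (∑ i ∈ Finset.range ((m+1)/2),
        2 * Real.sin (((2*i+1:ℕ):ℝ)*θ) * c (2*i+1) s)
        = ((m:ℝ)+1)/2 * (y s ⟨0, by omega⟩ + y s ⟨m-1, by omega⟩) := by
    intro s
    calc (∑ i ∈ Finset.range ((m+1)/2), 2 * Real.sin (((2*i+1:ℕ):ℝ)*θ) * c (2*i+1) s)
        = ∑ j : Fin m, (∑ i ∈ Finset.range ((m+1)/2),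
            2 * Real.sin ((2*(i:ℝ)+1)*θ)
              * Real.sin ((2*(i:ℝ)+1) * (((j.val:ℝ)+1) * θ))) * y s j := by
          simp only [hc, Finset.mul_sum]
          rw [Finset.sum_comm]
          refine Finset.sum_congr rfl fun j _ => ?_
          rw [Finset.sum_mul]
          refine Finset.sum_congr rfl fun i _ => ?_
          push_cast
          ring
      _ = ∑ j : Fin m, (((m:ℝ)+1)/2
            * ((if j.val = 0 then (1:ℝ) else 0) + (if j.val = m-1 then (1:ℝ) else 0)))
            * y s j := by
          refine Finset.sum_congr rfl fun j _ => ?_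
          rw [blossom_inv m hm j.val j.isLt]
      _ = ((m:ℝ)+1)/2 * (y s ⟨0, by omega⟩ + y s ⟨m-1, by omega⟩) := by
          rw [show (∑ j : Fin m, (((m:ℝ)+1)/2
              * ((if j.val = 0 then (1:ℝ) else 0) + (if j.val = m-1 then (1:ℝ) else 0)))
              * y s j)
            = ∑ j : Fin m, (((m:ℝ)+1)/2)
              * ((if j = (⟨0, by omega⟩ : Fin m) then y s j else 0)
                + (if j = (⟨m-1, by omega⟩ : Fin m) then y s j else 0)) from ?_]
          · rw [← Finset.mul_sum, Finset.sum_add_distrib,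
              Finset.sum_ite_eq' _ _ _, Finset.sum_ite_eq' _ _ _]
            simp
          refine Finset.sum_congr rfl fun j _ => ?_
          by_cases h0 : j.val = 0
          · have e1 : j = (⟨0, by omega⟩ : Fin m) := Fin.ext h0
            have e2 : j ≠ (⟨m-1, by omega⟩ : Fin m) := by
              intro hcon
              rw [hcon] at h0
              simp only [] at h0
              omega
            rw [if_pos h0, if_neg (show ¬(j.val = m - 1) by omega), if_pos e1, if_neg e2]
            ring
          · by_cases h1 : j.val = m-1
            · have e1 : j ≠ (⟨0, by omega⟩ : Fin m) := by
                intro hcon; rw [hcon] at h0; exact h0 rfl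
              have e2 : j = (⟨m-1, by omega⟩ : Fin m) := Fin.ext h1
              rw [if_neg h0, if_pos h1, if_neg e1, if_pos e2]
              ring
            · have e1 : j ≠ (⟨0, by omega⟩ : Fin m) := by
                intro hcon; rw [hcon] at h0; exact h0 rfl
              have e2 : j ≠ (⟨m-1, by omega⟩ : Fin m) := by
                intro hcon; rw [hcon] at h1; exact h1 rfl
              rw [if_neg h0, if_neg h1, if_neg e1, if_neg e2]
              ring
  -- main conclusion
  intro t
  have key := invr t
  have key2 : (∑ i ∈ Finset.range ((m+1)/2),
      2 * Real.sin (((2*i+1:ℕ):ℝ)*θ) * c (2*i+1) t)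
      = ((m:ℝ)+1)/2
        - ∑ i ∈ Finset.range ((m+1)/2),
            ((1 + Real.cos (((2*i+1:ℕ):ℝ)*θ))
              - 2 * Real.sin (((2*i+1:ℕ):ℝ)*θ) * c (2*i+1) 0)
            * (Real.cos (((2*i+1:ℕ):ℝ)*θ))^t := by
    rw [show (∑ i ∈ Finset.range ((m+1)/2),
        2 * Real.sin (((2*i+1:ℕ):ℝ)*θ) * c (2*i+1) t)
        = ∑ i ∈ Finset.range ((m+1)/2),
          ((1 + Real.cos (((2*i+1:ℕ):ℝ)*θ))
            - ((1 + Real.cos (((2*i+1:ℕ):ℝ)*θ))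
              - 2 * Real.sin (((2*i+1:ℕ):ℝ)*θ) * c (2*i+1) 0)
              * (Real.cos (((2*i+1:ℕ):ℝ)*θ))^t) from
      Finset.sum_congr rfl fun i _ => by rw [inv i t]; ring]
    rw [Finset.sum_sub_distrib]
    congr 1
    rw [← blossom_one m hm]
    refine Finset.sum_congr rfl fun i _ => ?_
    push_cast
    ring
  -- identify RHS sum with the F-sum
  have hIcc : (∑ i ∈ Finset.Icc 1 ((m + 1) / 2),
        (1 + Real.cos (π * (2 * i - 1 : ℕ) / (m + 1))
          - 2 * Real.sqrt (1 - Real.cos (π * (2 * i - 1 : ℕ) / (m + 1)) ^ 2)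
            * Real.sqrt (((m:ℝ) + 1) / 2)
            * ∑ j : Fin m,
                (Real.sqrt (2 / ((m:ℝ) + 1))
                  * Real.sin (π * (2 * i - 1 : ℕ) * (j.val + 1) / (m + 1)))
                * y 0 j)
        * Real.cos (π * (2 * i - 1 : ℕ) / (m + 1)) ^ t)
      = ∑ i ∈ Finset.range ((m+1)/2),
          ((1 + Real.cos (((2*i+1:ℕ):ℝ)*θ))
            - 2 * Real.sin (((2*i+1:ℕ):ℝ)*θ) * c (2*i+1) 0)
          * (Real.cos (((2*i+1:ℕ):ℝ)*θ))^t := by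
    rw [← Finset.Ico_add_one_right_eq_Icc, Finset.sum_Ico_eq_sum_range]
    rw [show (m+1)/2 + 1 - 1 = (m+1)/2 from by omega]
    refine Finset.sum_congr rfl fun i hi => ?_
    have hiM : i < (m+1)/2 := Finset.mem_range.1 hi
    have hk : 2 * (1 + i) - 1 = 2*i+1 := by omega
    rw [hk]
    have harg : π * ((2*i+1:ℕ):ℝ) / ((m:ℝ) + 1) = ((2*i+1:ℕ):ℝ)*θ := by
      rw [hθ]; ring
    have hsin_nonneg : 0 ≤ Real.sin (((2*i+1:ℕ):ℝ)*θ) := by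
      apply le_of_lt
      apply Real.sin_pos_of_pos_of_lt_pi
      · rw [hθ]
        have : (0:ℝ) < ((2*i+1:ℕ):ℝ) := by positivity
        positivity
      · rw [hθ]
        have hk2 : (2*i+1) < m + 1 := by omega
        have hk2' : ((2*i+1:ℕ):ℝ) < (m:ℝ) + 1 := by exact_mod_cast hk2
        have hpos : (0:ℝ) < (m:ℝ)+1 := by positivity
        calc ((2*i+1:ℕ):ℝ) * (π/((m:ℝ)+1)) < ((m:ℝ)+1) * (π/((m:ℝ)+1)) := by
              apply mul_lt_mul_of_pos_right hk2'
              positivity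
          _ = π := by field_simp
    have hsqrt : Real.sqrt (1 - Real.cos (((2*i+1:ℕ):ℝ)*θ) ^ 2)
        = Real.sin (((2*i+1:ℕ):ℝ)*θ) := by
      rw [← Real.sin_sq, Real.sqrt_sq hsin_nonneg]
    have hsum : (∑ j : Fin m,
          (Real.sqrt (2 / ((m:ℝ) + 1))
            * Real.sin (π * ((2*i+1:ℕ):ℝ) * ((j.val:ℝ) + 1) / ((m:ℝ) + 1)))
          * y 0 j)
        = Real.sqrt (2 / ((m:ℝ) + 1)) * c (2*i+1) 0 := by
      simp only [hc, Finset.mul_sum]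
      refine Finset.sum_congr rfl fun j _ => ?_
      rw [show π * ((2*i+1:ℕ):ℝ) * ((j.val:ℝ) + 1) / ((m:ℝ) + 1)
          = ((2*i+1:ℕ):ℝ) * (((j.val:ℝ)+1) * θ) from by rw [hθ]; ring]
      ring
    rw [harg, hsum, hsqrt]
    have hs2 : Real.sqrt (((m:ℝ) + 1) / 2) * Real.sqrt (2 / ((m:ℝ) + 1)) = 1 := by
      rw [← Real.sqrt_mul (by positivity)]
      rw [show ((m:ℝ) + 1) / 2 * (2 / ((m:ℝ) + 1)) = 1 from by field_simp]
      exact Real.sqrt_one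
    calc (1 + Real.cos (((2*i+1:ℕ):ℝ)*θ)
          - 2 * Real.sin (((2*i+1:ℕ):ℝ)*θ) * Real.sqrt (((m:ℝ) + 1) / 2)
            * (Real.sqrt (2 / ((m:ℝ) + 1)) * c (2*i+1) 0))
          * Real.cos (((2*i+1:ℕ):ℝ)*θ) ^ t
        = (1 + Real.cos (((2*i+1:ℕ):ℝ)*θ)
          - 2 * Real.sin (((2*i+1:ℕ):ℝ)*θ)
            * (Real.sqrt (((m:ℝ) + 1) / 2) * Real.sqrt (2 / ((m:ℝ) + 1)))
            * c (2*i+1) 0)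
          * Real.cos (((2*i+1:ℕ):ℝ)*θ) ^ t := by ring
      _ = _ := by rw [hs2]; ring
  rw [hIcc]
  have h := key2.symm.trans key
  have hm0 : (0:ℝ) < (m:ℝ)+1 := by positivity
  field_simp at h ⊢
  simp only [mul_comm θ]
  linarith
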